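/- Let D1 and D2 be coherent sets of desirable gambles on the nonempty sets X1 and X2 respectively, and let 𝔅_1 ⊆ P_∅(X1), 𝔅_2 ⊆ P_∅(X2). Then D1 ⊗ D2 is an independent product of D1 and D2: it is a coherent set of desirable gambles on X1×X2 that is epistemically independent and satisfies marg_1(D1⊗D2) = D1 and marg_2(D1⊗D2) = D2. -/
import Mathlib


open scoped BigOperators

namespace IPaper

variable {X : Type*}

/-- A gamble on `X`: a bounded real-valued function. -/
def IsGamble (f : X → ℝ) : Prop := ∃ M : ℝ, ∀ x, |f x| ≤ M

/-- The indicator gamble of an event. -/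
noncomputable def ind (B : Set X) : X → ℝ := Set.indicator B 1

/-- The set `G_{>0}(X)` of nonnegative nonzero gambles. -/
def Gpos (X : Type*) : Set (X → ℝ) := {f | IsGamble f ∧ 0 ≤ f ∧ f ≠ 0}

/-- A coherent set of desirable gambles. -/
structure CoherentSDG (D : Set (X → ℝ)) : Prop where
  subset_gambles : ∀ f ∈ D, IsGamble f
  d1 : ∀ f : X → ℝ, IsGamble f → 0 ≤ f → f ≠ 0 → f ∈ D
  d2 : ∀ f ∈ D, ∀ l : ℝ, 0 < l → l • f ∈ D
  d3 : ∀ f ∈ D, ∀ g ∈ D, f + g ∈ D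
  d4 : ∀ f : X → ℝ, f ≤ 0 → f ∉ D

/-- `posi A`: positive linear hull of `A`. -/
def posi (A : Set (X → ℝ)) : Set (X → ℝ) :=
  {g | ∃ (n : ℕ) (l : Fin (n + 1) → ℝ) (h : Fin (n + 1) → X → ℝ),
    (∀ i, 0 < l i) ∧ (∀ i, h i ∈ A) ∧ g = ∑ i, l i • h i}

/-- `E(A) := posi (A ∪ G_{>0}(X))`. -/
def natExtSet (A : Set (X → ℝ)) : Set (X → ℝ) := posi (A ∪ Gpos X)

/-- `C(X)`: all pairs of a gamble and a nonempty event. -/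
def domC (X : Type*) : Set ((X → ℝ) × Set X) := {p | IsGamble p.1 ∧ p.2.Nonempty}

/-- The conditional lower prevision `lp_D` derived from a set of gambles `D`. -/
noncomputable def lpOf (D : Set (X → ℝ)) (f : X → ℝ) (B : Set X) : EReal :=
  sSup (Real.toEReal '' {m : ℝ | (fun x => (f x - m) * ind B x) ∈ D})

/-- Coherence (Williams) of a conditional lower prevision on a domain `C`. -/
def Coherent (C : Set ((X → ℝ) × Set X)) (lp : (X → ℝ) → Set X → EReal) : Prop :=
  ∃ D : Set (X → ℝ), CoherentSDG D ∧ ∀ p ∈ C, lp p.1 p.2 = lpOf D p.1 p.2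

/-- The set `A_lp`. -/
def Alp (C : Set ((X → ℝ) × Set X)) (lp : (X → ℝ) → Set X → EReal) : Set (X → ℝ) :=
  {g | ∃ p ∈ C, ∃ m : ℝ, (m : EReal) < lp p.1 p.2 ∧ g = fun x => (p.1 x - m) * ind p.2 x}

/-- `E(lp) := E(A_lp)`. -/
def ElpSet (C : Set ((X → ℝ) × Set X)) (lp : (X → ℝ) → Set X → EReal) : Set (X → ℝ) :=
  natExtSet (Alp C lp)

/-- The natural extension of `lp` to all of `C(X)`. -/
noncomputable def natExtLP (C : Set ((X → ℝ) × Set X)) (lp : (X → ℝ) → Set X → EReal)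
    (f : X → ℝ) (B : Set X) : EReal :=
  lpOf (ElpSet C lp) f B

/-- Simple `B`-measurable gamble. -/
def SimpleMeas (Bfam : Set (Set X)) (g : X → ℝ) : Prop :=
  ∃ (c0 : ℝ) (n : ℕ) (c : Fin n → ℝ) (Bs : Fin n → Set X),
    0 ≤ c0 ∧ (∀ i, 0 ≤ c i) ∧ (∀ i, Bs i ∈ Bfam) ∧
    g = fun x => c0 + ∑ i, c i * ind (Bs i) x

/-- `B`-measurable gamble: uniform limit of nonnegative simple `B`-measurable gambles. -/
def BMeas (Bfam : Set (Set X)) (g : X → ℝ) : Prop :=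
  ∃ gs : ℕ → X → ℝ, (∀ n, 0 ≤ gs n ∧ SimpleMeas Bfam (gs n)) ∧
    TendstoUniformly gs g Filter.atTop

/-- A conditional linear prevision on `C(X)`: a coherent self-conjugate conditional
lower prevision on the full domain. -/
def CondLinPrev (P : (X → ℝ) → Set X → EReal) : Prop :=
  Coherent (domC X) P ∧ ∀ p ∈ domC X, P p.1 p.2 = -P (-p.1) p.2

section Product

variable {X1 X2 : Type*}

/-- `A_{1→2}`. -/
def A12 (D2 : Set (X2 → ℝ)) (F1 : Set (Set X1)) : Set (X1 × X2 → ℝ) :=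
  {g | ∃ f2 ∈ D2, ∃ B1 ∈ F1 ∪ {Set.univ}, g = fun p => f2 p.2 * ind B1 p.1}

/-- `A_{2→1}`. -/
def A21 (D1 : Set (X1 → ℝ)) (F2 : Set (Set X2)) : Set (X1 × X2 → ℝ) :=
  {g | ∃ f1 ∈ D1, ∃ B2 ∈ F2 ∪ {Set.univ}, g = fun p => f1 p.1 * ind B2 p.2}

/-- `D1 ⊗ D2`, relative to the families of conditioning events `F1`, `F2`. -/
def indNatExt (D1 : Set (X1 → ℝ)) (D2 : Set (X2 → ℝ))
    (F1 : Set (Set X1)) (F2 : Set (Set X2)) : Set (X1 × X2 → ℝ) :=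
  natExtSet (A12 D2 F1 ∪ A21 D1 F2)

/-- `marg_1(D)`. -/
def marg1 (D : Set (X1 × X2 → ℝ)) : Set (X1 → ℝ) :=
  {f | IsGamble f ∧ (fun p : X1 × X2 => f p.1) ∈ D}

/-- `marg_2(D)`. -/
def marg2 (D : Set (X1 × X2 → ℝ)) : Set (X2 → ℝ) :=
  {f | IsGamble f ∧ (fun p : X1 × X2 => f p.2) ∈ D}

/-- `marg_1(D|B2)`. -/
def marg1c (D : Set (X1 × X2 → ℝ)) (B2 : Set X2) : Set (X1 → ℝ) :=
  {f | IsGamble f ∧ (fun p : X1 × X2 => f p.1 * ind B2 p.2) ∈ D}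

/-- `marg_2(D|B1)`. -/
def marg2c (D : Set (X1 × X2 → ℝ)) (B1 : Set X1) : Set (X2 → ℝ) :=
  {f | IsGamble f ∧ (fun p : X1 × X2 => f p.2 * ind B1 p.1) ∈ D}

/-- Epistemic independence of a set of desirable gambles on `X1 × X2`. -/
def EpIndSDG (F1 : Set (Set X1)) (F2 : Set (Set X2)) (D : Set (X1 × X2 → ℝ)) : Prop :=
  (∀ B2 ∈ F2, marg1c D B2 = marg1 D) ∧ (∀ B1 ∈ F1, marg2c D B1 = marg2 D)

/-- Independent product (of sets of desirable gambles). -/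
def IndProductSDG (F1 : Set (Set X1)) (F2 : Set (Set X2))
    (D1 : Set (X1 → ℝ)) (D2 : Set (X2 → ℝ)) (D : Set (X1 × X2 → ℝ)) : Prop :=
  CoherentSDG D ∧ EpIndSDG F1 F2 D ∧ marg1 D = D1 ∧ marg2 D = D2

/-- The independent natural extension `lp1 ⊗ lp2` on `C(X1 × X2)`. -/
noncomputable def lpProd (C1 : Set ((X1 → ℝ) × Set X1)) (lp1 : (X1 → ℝ) → Set X1 → EReal)
    (C2 : Set ((X2 → ℝ) × Set X2)) (lp2 : (X2 → ℝ) → Set X2 → EReal)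
    (F1 : Set (Set X1)) (F2 : Set (Set X2)) :
    (X1 × X2 → ℝ) → Set (X1 × X2) → EReal :=
  lpOf (indNatExt (ElpSet C1 lp1) (ElpSet C2 lp2) F1 F2)

/-- An independent domain `C ⊆ C(X1 × X2)`. -/
def IndepDomain (F1 : Set (Set X1)) (F2 : Set (Set X2))
    (C : Set ((X1 × X2 → ℝ) × Set (X1 × X2))) : Prop :=
  (∀ (f1 : X1 → ℝ) (B1 : Set X1), IsGamble f1 → B1.Nonempty → ∀ B2 ∈ F2,
    (((fun p : X1 × X2 => f1 p.1), B1 ×ˢ (Set.univ : Set X2)) ∈ C ↔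
      ((fun p : X1 × X2 => f1 p.1), B1 ×ˢ B2) ∈ C)) ∧
  (∀ (f2 : X2 → ℝ) (B2 : Set X2), IsGamble f2 → B2.Nonempty → ∀ B1 ∈ F1,
    (((fun p : X1 × X2 => f2 p.2), (Set.univ : Set X1) ×ˢ B2) ∈ C ↔
      ((fun p : X1 × X2 => f2 p.2), B1 ×ˢ B2) ∈ C))

/-- Epistemic independence of a conditional lower prevision on a domain `C`. -/
def EpIndLP (F1 : Set (Set X1)) (F2 : Set (Set X2))
    (C : Set ((X1 × X2 → ℝ) × Set (X1 × X2)))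
    (lp : (X1 × X2 → ℝ) → Set (X1 × X2) → EReal) : Prop :=
  (∀ (f1 : X1 → ℝ) (B1 : Set X1), IsGamble f1 → B1.Nonempty →
    ((fun p : X1 × X2 => f1 p.1), B1 ×ˢ (Set.univ : Set X2)) ∈ C → ∀ B2 ∈ F2,
    lp (fun p : X1 × X2 => f1 p.1) (B1 ×ˢ (Set.univ : Set X2)) =
      lp (fun p : X1 × X2 => f1 p.1) (B1 ×ˢ B2)) ∧
  (∀ (f2 : X2 → ℝ) (B2 : Set X2), IsGamble f2 → B2.Nonempty →
    ((fun p : X1 × X2 => f2 p.2), (Set.univ : Set X1) ×ˢ B2) ∈ C → ∀ B1 ∈ F1,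
    lp (fun p : X1 × X2 => f2 p.2) ((Set.univ : Set X1) ×ˢ B2) =
      lp (fun p : X1 × X2 => f2 p.2) (B1 ×ˢ B2))

/-- Independent product of two conditional lower previsions, on the joint domain `C`. -/
def IndProductLP (F1 : Set (Set X1)) (F2 : Set (Set X2))
    (C1 : Set ((X1 → ℝ) × Set X1)) (lp1 : (X1 → ℝ) → Set X1 → EReal)
    (C2 : Set ((X2 → ℝ) × Set X2)) (lp2 : (X2 → ℝ) → Set X2 → EReal)
    (C : Set ((X1 × X2 → ℝ) × Set (X1 × X2)))
    (lp : (X1 × X2 → ℝ) → Set (X1 × X2) → EReal) : Prop :=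
  Coherent C lp ∧ EpIndLP F1 F2 C lp ∧
  (∀ p ∈ C1, lp (fun q : X1 × X2 => p.1 q.1) (p.2 ×ˢ (Set.univ : Set X2)) = lp1 p.1 p.2) ∧
  (∀ p ∈ C2, lp (fun q : X1 × X2 => p.1 q.2) ((Set.univ : Set X1) ×ˢ p.2) = lp2 p.1 p.2)

end Product


/-! ### Auxiliary lemmas for `stmt9` -/

section AuxBasic

variable {X : Type*}

lemma ind_nonneg' (B : Set X) (x : X) : 0 ≤ ind B x :=
  Set.indicator_nonneg (fun _ _ => zero_le_one) x

lemma ind_le_one' (B : Set X) (x : X) : ind B x ≤ 1 := by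
  classical
  by_cases h : x ∈ B
  · simp [ind, Set.indicator_of_mem h]
  · simp [ind, Set.indicator_of_notMem h]

lemma ind_of_mem' {B : Set X} {x : X} (h : x ∈ B) : ind B x = 1 := by
  simp [ind, Set.indicator_of_mem h]

lemma isGamble_ind (B : Set X) : IsGamble (ind B) :=
  ⟨1, fun x => abs_le.2 ⟨le_trans (by norm_num) (ind_nonneg' B x), ind_le_one' B x⟩⟩

lemma isGamble_const (c : ℝ) : IsGamble (fun _ : X => c) := ⟨|c|, fun _ => le_rfl⟩

lemma IsGamble.add' {f g : X → ℝ} (hf : IsGamble f) (hg : IsGamble g) :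
    IsGamble (fun x => f x + g x) := by
  obtain ⟨M, hM⟩ := hf; obtain ⟨K, hK⟩ := hg
  exact ⟨M + K, fun x => (abs_add_le _ _).trans (add_le_add (hM x) (hK x))⟩

lemma IsGamble.mul' {f g : X → ℝ} (hf : IsGamble f) (hg : IsGamble g) :
    IsGamble (fun x => f x * g x) := by
  obtain ⟨M, hM⟩ := hf; obtain ⟨K, hK⟩ := hg
  refine ⟨M * K, fun x => ?_⟩
  rw [abs_mul]
  exact mul_le_mul (hM x) (hK x) (abs_nonneg _) ((abs_nonneg (f x)).trans (hM x))

lemma IsGamble.const_mul' {f : X → ℝ} (hf : IsGamble f) (c : ℝ) :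
    IsGamble (fun x => c * f x) := (isGamble_const c).mul' hf

lemma IsGamble.comp' {Y : Type*} {f : X → ℝ} (hf : IsGamble f) (σ : Y → X) :
    IsGamble (fun y => f (σ y)) := by
  obtain ⟨M, hM⟩ := hf; exact ⟨M, fun y => hM (σ y)⟩

lemma isGamble_finsetSum {ι : Type*} (t : Finset ι) (f : ι → X → ℝ) :
    (∀ i ∈ t, IsGamble (f i)) → IsGamble (fun x => ∑ i ∈ t, f i x) := by
  classical
  induction t using Finset.cons_induction with
  | empty => intro _; simpa using isGamble_const (X := X) 0
  | cons a s ha ih =>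
    intro hf
    simp only [Finset.sum_cons]
    exact (hf a (Finset.mem_cons_self a s)).add' (ih fun i hi => hf i (Finset.mem_cons_of_mem hi))

lemma exists_pos_of_nonneg_ne_zero {f : X → ℝ} (h0 : 0 ≤ f) (hne : f ≠ 0) : ∃ x, 0 < f x := by
  by_contra hc
  push_neg at hc
  exact hne (funext fun x => le_antisymm (hc x) (h0 x))

lemma CoherentSDG.add_nonneg_mem {D : Set (X → ℝ)} (hD : CoherentSDG D) {d e : X → ℝ}
    (hd : d ∈ D) (he : 0 ≤ e) (heg : IsGamble e) : d + e ∈ D := by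
  by_cases h0 : e = 0
  · simpa [h0] using hd
  · exact hD.d3 d hd e (hD.d1 e heg he h0)

lemma coneCombo_main {D : Set (X → ℝ)} (hD : CoherentSDG D) {ι : Type*} [Fintype ι]
    (c : ι → ℝ) (φ : ι → X → ℝ) (hc : ∀ i, 0 ≤ c i) (hg : ∀ i, IsGamble (φ i))
    (hφ : ∀ i, φ i ∈ D ∨ 0 ≤ φ i) :
    ((∃ i, 0 < c i ∧ φ i ∈ D) → (fun x => ∑ i, c i * φ i x) ∈ D) ∧
    ((fun x => ∑ i, c i * φ i x) ∈ D ∨ 0 ≤ fun x => ∑ i, c i * φ i x) := by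
  classical
  set p : ι → Prop := fun i => 0 < c i ∧ φ i ∈ D with hp
  have hsplit : (fun x => ∑ i, c i * φ i x)
      = (fun x => ∑ i ∈ Finset.univ.filter p, c i * φ i x)
        + fun x => ∑ i ∈ Finset.univ.filter (fun i => ¬ p i), c i * φ i x := by
    funext x
    simp only [Pi.add_apply]
    exact (Finset.sum_filter_add_sum_filter_not _ _ _).symm
  have hE : 0 ≤ fun x => ∑ i ∈ Finset.univ.filter (fun i => ¬ p i), c i * φ i x := by
    rw [Pi.le_def]
    intro x
    apply Finset.sum_nonneg
    intro i hi
    have hnp : ¬ p i := (Finset.mem_filter.1 hi).2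
    rcases hφ i with hmem | hpos
    · rcases (hc i).eq_or_lt with hz | hcpos
      · rw [← hz, zero_mul]
      · exact absurd ⟨hcpos, hmem⟩ hnp
    · exact mul_nonneg (hc i) (hpos x)
  have hEg : IsGamble fun x => ∑ i ∈ Finset.univ.filter (fun i => ¬ p i), c i * φ i x :=
    isGamble_finsetSum _ _ fun i _ => (hg i).const_mul' (c i)
  have hDmem : (Finset.univ.filter p).Nonempty →
      (fun x => ∑ i ∈ Finset.univ.filter p, c i * φ i x) ∈ D := by
    intro hne
    have heq : (fun x => ∑ i ∈ Finset.univ.filter p, c i * φ i x)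
        = ∑ i ∈ Finset.univ.filter p, c i • φ i := by
      funext x
      rw [Finset.sum_apply]
      exact Finset.sum_congr rfl fun i _ => rfl
    rw [heq]
    refine Finset.sum_induction_nonempty _ (· ∈ D) (fun a b ha hb => hD.d3 a ha b hb) hne ?_
    intro i hi
    have hpi : p i := (Finset.mem_filter.1 hi).2
    exact hD.d2 (φ i) hpi.2 (c i) hpi.1
  constructor
  · rintro ⟨i₀, hi₀⟩
    have hne : (Finset.univ.filter p).Nonempty :=
      ⟨i₀, Finset.mem_filter.2 ⟨Finset.mem_univ _, hi₀⟩⟩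
    rw [hsplit]
    exact hD.add_nonneg_mem (hDmem hne) hE hEg
  · by_cases hne : (Finset.univ.filter p).Nonempty
    · left; rw [hsplit]; exact hD.add_nonneg_mem (hDmem hne) hE hEg
    · right
      rw [hsplit, Pi.le_def]
      have hempty : Finset.univ.filter p = ∅ := Finset.not_nonempty_iff_eq_empty.1 hne
      intro x
      simp only [Pi.add_apply, hempty, Finset.sum_empty, zero_add]
      exact hE x

lemma coneCombo' {D : Set (X → ℝ)} (hD : CoherentSDG D) {ι : Type*} [Fintype ι]
    (c : ι → ℝ) (φ : ι → X → ℝ) (hc : ∀ i, 0 ≤ c i) (hg : ∀ i, IsGamble (φ i))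
    (hφ : ∀ i, φ i ∈ D ∨ 0 ≤ φ i) (h₀ : ∃ i, 0 < c i ∧ φ i ∈ D) :
    (fun x => ∑ i, c i * φ i x) ∈ D :=
  (coneCombo_main hD c φ hc hg hφ).1 h₀

lemma coneCombo {D : Set (X → ℝ)} (hD : CoherentSDG D) {ι : Type*} [Fintype ι]
    (c : ι → ℝ) (φ : ι → X → ℝ) (hc : ∀ i, 0 ≤ c i) (hg : ∀ i, IsGamble (φ i))
    (hφ : ∀ i, φ i ∈ D ∨ 0 ≤ φ i) :
    (fun x => ∑ i, c i * φ i x) ∈ D ∨ 0 ≤ fun x => ∑ i, c i * φ i x :=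
  (coneCombo_main hD c φ hc hg hφ).2

end AuxBasic

section Separation

/-- Key separation lemma: finitely many desirable gambles admit a common convex combination
of evaluation points on which each has strictly positive weighted sum. -/
lemma lemA {X : Type*} [Nonempty X] {D : Set (X → ℝ)} (hD : CoherentSDG D)
    {ι : Type} [Fintype ι] (g : ι → X → ℝ) (hg : ∀ i, g i ∈ D) :
    ∃ (κ : Type) (t : Finset κ) (w : κ → ℝ) (zs : κ → X),
      (∀ j ∈ t, 0 ≤ w j) ∧ (∑ j ∈ t, w j = 1) ∧
      ∀ i, 0 < ∑ j ∈ t, w j * g i (zs j) := by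
  classical
  set φ : X → (ι → ℝ) := fun x i => g i x with hφdef
  by_cases hdis : Disjoint {y : ι → ℝ | ∀ i, 0 < y i} (convexHull ℝ (Set.range φ))
  · exfalso
    have hsc : Convex ℝ {y : ι → ℝ | ∀ i, 0 < y i} := by
      intro y hy z hz a b ha hb hab
      intro i
      simp only [Pi.add_apply, Pi.smul_apply, smul_eq_mul]
      rcases ha.eq_or_lt with h | h
      · have hb1 : b = 1 := by linarith
        have := hz i
        rw [← h, hb1]
        simpa using this
      · have h1 : 0 ≤ b * z i := mul_nonneg hb (le_of_lt (hz i))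
        have h2 := mul_pos h (hy i)
        linarith
    have hso : IsOpen {y : ι → ℝ | ∀ i, 0 < y i} := by
      have heq : {y : ι → ℝ | ∀ i, 0 < y i} = ⋂ i, {y : ι → ℝ | 0 < y i} := by
        ext y; simp
      rw [heq]
      exact isOpen_iInter_of_finite fun i => isOpen_lt continuous_const (continuous_apply i)
    obtain ⟨F, u, hFs, hFt⟩ :=
      geometric_hahn_banach_open hsc hso (convex_convexHull ℝ _) hdis
    set lam : ι → ℝ := fun i => F (Pi.single i 1) with hlamdef
    have hFeq : ∀ y : ι → ℝ, F y = ∑ i, y i * lam i := by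
      intro y
      have hy : y = ∑ i, y i • (Pi.single i 1 : ι → ℝ) := by
        funext j
        rw [Finset.sum_apply]
        simp [Pi.single_apply, mul_ite, Finset.sum_ite_eq]
      conv_lhs => rw [hy]
      rw [map_sum]
      refine Finset.sum_congr rfl fun i _ => ?_
      rw [map_smul, smul_eq_mul]
    have hlam : ∀ i, lam i ≤ 0 := by
      intro i
      by_contra hpos
      push_neg at hpos
      set S1 : ℝ := F (fun _ => (1 : ℝ)) with hS1
      set T : ℝ := max 1 ((u - S1) / lam i + 1) with hT
      have hT1 : (1 : ℝ) ≤ T := le_max_left _ _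
      have hT2 : (u - S1) / lam i + 1 ≤ T := le_max_right _ _
      set cc : ι → ℝ := (fun _ => (1 : ℝ)) + (T - 1) • (Pi.single i 1 : ι → ℝ) with hcc
      have hccs : ∀ j, 0 < cc j := by
        intro j
        rw [hcc]
        simp only [Pi.add_apply, Pi.smul_apply, smul_eq_mul, Pi.single_apply]
        by_cases hj : j = i
        · subst hj; simp; linarith
        · rw [if_neg hj, mul_zero]; norm_num
      have hFcc : F cc = S1 + (T - 1) * lam i := by
        rw [hcc, map_add, map_smul, smul_eq_mul, hS1]
      have hlt : F cc < u := hFs cc hccs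
      have hkey : u - S1 ≤ (T - 1) * lam i := by
        have h2 : (u - S1) / lam i ≤ T - 1 := by linarith
        calc u - S1 = ((u - S1) / lam i) * lam i :=
              (div_mul_cancel₀ _ (ne_of_gt hpos)).symm
          _ ≤ (T - 1) * lam i := mul_le_mul_of_nonneg_right h2 (le_of_lt hpos)
      rw [hFcc] at hlt
      linarith
    by_cases hzero : ∀ i, lam i = 0
    · have h1 : F (fun _ => (1 : ℝ)) < u := hFs _ (fun _ => one_pos)
      have h1' : F (fun _ => (1 : ℝ)) = 0 := by
        rw [hFeq]; simp [hzero]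
      obtain ⟨x⟩ := ‹Nonempty X›
      have h2 : u ≤ F (φ x) := hFt _ (subset_convexHull ℝ _ ⟨x, rfl⟩)
      have h2' : F (φ x) = 0 := by
        rw [hFeq]; simp [hzero]
      linarith
    · push_neg at hzero
      obtain ⟨i₀, hi₀⟩ := hzero
      have hi₀' : lam i₀ < 0 := lt_of_le_of_ne (hlam i₀) hi₀
      have hS1lt : (∑ i, lam i) < 0 := by
        have h := Finset.sum_lt_sum (fun i _ => hlam i)
          ⟨i₀, Finset.mem_univ _, hi₀'⟩
        simpa using h
      have hu : 0 ≤ u := by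
        by_contra hun
        push_neg at hun
        have hcs : ∀ j : ι, 0 < (fun _ => u / (∑ k, lam k)) j :=
          fun _ => div_pos_of_neg_of_neg hun hS1lt
        have hlt := hFs _ hcs
        rw [hFeq] at hlt
        have hsum : (∑ i, u / (∑ k, lam k) * lam i) = u := by
          rw [← Finset.mul_sum]
          exact div_mul_cancel₀ _ (ne_of_lt hS1lt)
        rw [hsum] at hlt
        exact lt_irrefl _ hlt
      have hGmem : (fun x => ∑ i, (-lam i) * g i x) ∈ D :=
        coneCombo' hD _ g (fun i => neg_nonneg.2 (hlam i))
          (fun i => hD.subset_gambles _ (hg i)) (fun i => Or.inl (hg i))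
          ⟨i₀, by linarith, hg i₀⟩
      have hGle : (fun x => ∑ i, (-lam i) * g i x) ≤ 0 := by
        rw [Pi.le_def]
        intro x
        have hx : u ≤ F (φ x) := hFt _ (subset_convexHull ℝ _ ⟨x, rfl⟩)
        rw [hFeq] at hx
        have hGx : (∑ i, (-lam i) * g i x) = -∑ i, φ x i * lam i := by
          rw [← Finset.sum_neg_distrib]
          refine Finset.sum_congr rfl fun i _ => ?_
          simp only [hφdef]
          ring
        simp only [Pi.zero_apply]
        rw [hGx]
        linarith
      exact hD.d4 _ hGle hGmem
  · rw [Set.not_disjoint_iff] at hdis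
    obtain ⟨y, hys, hyt⟩ := hdis
    rw [convexHull_eq] at hyt
    obtain ⟨κ, t, w, z, hw0, hw1, hz, hyc⟩ := hyt
    refine ⟨κ, t, w,
      fun j => if hj : ∃ x, φ x = z j then hj.choose else Classical.arbitrary X,
      hw0, hw1, fun i => ?_⟩
    have hcm : t.centerMass w z = ∑ j ∈ t, w j • z j :=
      Finset.centerMass_eq_of_sum_1 _ _ hw1
    have hyi : y i = ∑ j ∈ t, w j *
        g i (if hj : ∃ x, φ x = z j then hj.choose else Classical.arbitrary X) := by
      rw [← hyc, hcm, Finset.sum_apply]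
      refine Finset.sum_congr rfl fun j hj => ?_
      have hjr : ∃ x, φ x = z j := hz j hj
      rw [dif_pos hjr, Pi.smul_apply, smul_eq_mul]
      congr 1
      have hspec : φ hjr.choose = z j := hjr.choose_spec
      exact (congrFun hspec i).symm
    rw [← hyi]
    exact hys i

end Separation

section ProductAux

variable {X1 X2 : Type*}

/-- Swap of a gamble on a product. -/
def swapFun (g : X1 × X2 → ℝ) : X2 × X1 → ℝ := fun p => g (p.2, p.1)

lemma swapFun_A12 {D2 : Set (X2 → ℝ)} {F1 : Set (Set X1)} {g : X1 × X2 → ℝ}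
    (hg : g ∈ A12 D2 F1) : swapFun g ∈ A21 D2 F1 := by
  obtain ⟨f2, hf2, B1, hB1, rfl⟩ := hg
  exact ⟨f2, hf2, B1, hB1, rfl⟩

lemma swapFun_A21 {D1 : Set (X1 → ℝ)} {F2 : Set (Set X2)} {g : X1 × X2 → ℝ}
    (hg : g ∈ A21 D1 F2) : swapFun g ∈ A12 D1 F2 := by
  obtain ⟨f1, hf1, B2, hB2, rfl⟩ := hg
  exact ⟨f1, hf1, B2, hB2, rfl⟩

lemma swapFun_Gpos {g : X1 × X2 → ℝ} (hg : g ∈ Gpos (X1 × X2)) :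
    swapFun g ∈ Gpos (X2 × X1) := by
  obtain ⟨hgam, hpos, hne⟩ := hg
  refine ⟨?_, ?_, ?_⟩
  · show IsGamble fun p : X2 × X1 => g (p.2, p.1)
    exact hgam.comp' _
  · rw [Pi.le_def]
    intro p
    exact hpos (p.2, p.1)
  · intro h0
    apply hne
    funext p
    exact congrFun h0 (p.2, p.1)

lemma sum_smul_apply {N : ℕ} {Y : Type*} (l : Fin (N + 1) → ℝ) (h : Fin (N + 1) → Y → ℝ)
    (p : Y) : (∑ i, l i • h i) p = ∑ i, l i * h i p := by
  rw [Finset.sum_apply]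
  exact Finset.sum_congr rfl fun i _ => rfl

lemma swapFun_sum {N : ℕ} (l : Fin (N + 1) → ℝ) (h : Fin (N + 1) → X1 × X2 → ℝ) :
    swapFun (∑ i, l i • h i) = ∑ i, l i • swapFun (h i) := by
  funext p
  rw [show swapFun (∑ i, l i • h i) p = (∑ i, l i • h i) (p.2, p.1) from rfl,
    sum_smul_apply, sum_smul_apply]
  rfl

lemma indNatExt_swap {D1 : Set (X1 → ℝ)} {D2 : Set (X2 → ℝ)}
    {F1 : Set (Set X1)} {F2 : Set (Set X2)} {g : X1 × X2 → ℝ}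
    (hg : g ∈ indNatExt D1 D2 F1 F2) : swapFun g ∈ indNatExt D2 D1 F2 F1 := by
  obtain ⟨N, l, h, hl, hmem, rfl⟩ := hg
  refine ⟨N, l, fun i => swapFun (h i), hl, ?_, swapFun_sum l h⟩
  intro i
  rcases hmem i with (h12 | h21) | hgp
  · exact Or.inl (Or.inr (swapFun_A12 h12))
  · exact Or.inl (Or.inl (swapFun_A21 h21))
  · exact Or.inr (swapFun_Gpos hgp)

lemma isGamble_of_gen {D1 : Set (X1 → ℝ)} {D2 : Set (X2 → ℝ)}
    {F1 : Set (Set X1)} {F2 : Set (Set X2)}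
    (hD1 : CoherentSDG D1) (hD2 : CoherentSDG D2)
    {h : X1 × X2 → ℝ} (hmem : h ∈ (A12 D2 F1 ∪ A21 D1 F2) ∪ Gpos (X1 × X2)) :
    IsGamble h := by
  rcases hmem with (h12 | h21) | hgp
  · obtain ⟨f2, hf2, B1, hB1, rfl⟩ := h12
    exact ((hD2.subset_gambles f2 hf2).comp' _).mul' ((isGamble_ind B1).comp' _)
  · obtain ⟨f1, hf1, B2, hB2, rfl⟩ := h21
    exact ((hD1.subset_gambles f1 hf1).comp' _).mul' ((isGamble_ind B2).comp' _)
  · exact hgp.1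

lemma isGamble_of_mem_indNatExt {D1 : Set (X1 → ℝ)} {D2 : Set (X2 → ℝ)}
    {F1 : Set (Set X1)} {F2 : Set (Set X2)}
    (hD1 : CoherentSDG D1) (hD2 : CoherentSDG D2)
    {g : X1 × X2 → ℝ} (hg : g ∈ indNatExt D1 D2 F1 F2) : IsGamble g := by
  obtain ⟨N, l, h, hl, hmem, rfl⟩ := hg
  have heq : (∑ i, l i • h i) = fun p => ∑ i, l i * h i p := by
    funext p
    exact sum_smul_apply l h p
  rw [heq]
  exact isGamble_finsetSum _ _ fun i _ =>
    (isGamble_of_gen hD1 hD2 (hmem i)).const_mul' (l i)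

lemma mem_natExtSet_self {X : Type*} {A : Set (X → ℝ)} {f : X → ℝ}
    (hf : f ∈ A ∪ Gpos X) : f ∈ natExtSet A := by
  refine ⟨0, fun _ => 1, fun _ => f, fun _ => one_pos, fun _ => hf, ?_⟩
  rw [Fin.sum_univ_one, one_smul]

lemma natExtSet_smul {X : Type*} {A : Set (X → ℝ)} {f : X → ℝ}
    (hf : f ∈ natExtSet A) {c : ℝ} (hc : 0 < c) : c • f ∈ natExtSet A := by
  obtain ⟨N, l, h, hl, hmem, rfl⟩ := hf
  refine ⟨N, fun i => c * l i, h, fun i => mul_pos hc (hl i), hmem, ?_⟩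
  rw [Finset.smul_sum]
  exact Finset.sum_congr rfl fun i _ => smul_smul c (l i) (h i)

lemma natExtSet_add {X : Type*} {A : Set (X → ℝ)} {f g : X → ℝ}
    (hf : f ∈ natExtSet A) (hg : g ∈ natExtSet A) : f + g ∈ natExtSet A := by
  classical
  obtain ⟨N, l, h, hl, hmem, rfl⟩ := hf
  obtain ⟨M, m, k, hm, hkmem, rfl⟩ := hg
  refine ⟨N + 1 + M, fun i => Sum.elim l m (finSumFinEquiv.symm i),
    fun i => Sum.elim h k (finSumFinEquiv.symm i), fun i => ?_, fun i => ?_, ?_⟩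
  · show 0 < Sum.elim l m (finSumFinEquiv.symm i)
    rcases h' : (finSumFinEquiv.symm i : Fin (N + 1) ⊕ Fin (M + 1)) with j | j
    · exact hl j
    · exact hm j
  · show Sum.elim h k (finSumFinEquiv.symm i) ∈ A ∪ Gpos X
    rcases h' : (finSumFinEquiv.symm i : Fin (N + 1) ⊕ Fin (M + 1)) with j | j
    · exact hmem j
    · exact hkmem j
  · beta_reduce
    have heq : (∑ i : Fin (N + 1 + M + 1),
        Sum.elim l m (finSumFinEquiv.symm i) • Sum.elim h k (finSumFinEquiv.symm i))
        = ∑ s : Fin (N + 1) ⊕ Fin (M + 1), Sum.elim l m s • Sum.elim h k s :=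
      Fintype.sum_equiv (@finSumFinEquiv (N + 1) (M + 1)).symm
        (fun i => Sum.elim l m (finSumFinEquiv.symm i) • Sum.elim h k (finSumFinEquiv.symm i))
        (fun s => Sum.elim l m s • Sum.elim h k s) (fun i => rfl)
    rw [heq, Fintype.sum_sum_type]
    simp

end ProductAux

section KeyLemmas

variable {X1 X2 : Type*}

lemma sum_swap_mul {α : Type*} (t : Finset α) (w : α → ℝ) {N : ℕ}
    (l : Fin (N + 1) → ℝ) (v : Fin (N + 1) → α → ℝ) :
    ∑ j ∈ t, w j * (∑ i, l i * v i j) = ∑ i, l i * (∑ j ∈ t, w j * v i j) := by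
  simp_rw [Finset.mul_sum]
  rw [Finset.sum_comm]
  exact Finset.sum_congr rfl fun i _ => Finset.sum_congr rfl fun j _ => by ring

lemma key1_of_A21 [Nonempty X1] [Nonempty X2]
    {D1 : Set (X1 → ℝ)} {D2 : Set (X2 → ℝ)} {F1 : Set (Set X1)} {F2 : Set (Set X2)}
    (hD1 : CoherentSDG D1) (hD2 : CoherentSDG D2) (hF2 : ∀ A ∈ F2, A.Nonempty)
    {N : ℕ} (l : Fin (N + 1) → ℝ) (h : Fin (N + 1) → X1 × X2 → ℝ)
    (hl : ∀ i, 0 < l i)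
    (hmem : ∀ i, h i ∈ (A12 D2 F1 ∪ A21 D1 F2) ∪ Gpos (X1 × X2))
    (hA : ∃ i, h i ∈ A21 D1 F2) :
    ∃ p, 0 < (∑ i, l i • h i) p := by
  classical
  by_contra hno
  push_neg at hno
  set ι := {i : Fin (N + 1) // h i ∈ A21 D1 F2} with hι
  have hsel : ∀ ii : ι, ∃ f1 ∈ D1, ∃ B2 ∈ F2 ∪ {Set.univ},
      h ii.1 = fun p => f1 p.1 * ind B2 p.2 := fun ii => ii.2
  choose f1sel hf1sel B2sel hB2sel hrep using hsel
  have hne : ∀ ii : ι, (B2sel ii).Nonempty := by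
    intro ii
    rcases hB2sel ii with hmem' | huniv
    · exact hF2 _ hmem'
    · rw [Set.mem_singleton_iff] at huniv
      rw [huniv]
      exact Set.univ_nonempty
  obtain ⟨κ, t, w, zs, hw0, hw1, hposv⟩ := lemA hD1 f1sel hf1sel
  set φ : Fin (N + 1) → X2 → ℝ := fun i x2 => ∑ j ∈ t, w j * h i (zs j, x2) with hφ
  have hφg : ∀ i, IsGamble (φ i) := by
    intro i
    exact isGamble_finsetSum t (fun j => fun x2 => w j * h i (zs j, x2))
      (fun j _ => ((isGamble_of_gen hD1 hD2 (hmem i)).comp' _).const_mul' (w j))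
  have hA21φ : ∀ i, ∀ hi : h i ∈ A21 D1 F2, φ i ∈ D2 := by
    intro i hi
    have hposi := hposv ⟨i, hi⟩
    have heq : φ i = fun x2 =>
        (∑ j ∈ t, w j * f1sel ⟨i, hi⟩ (zs j)) * ind (B2sel ⟨i, hi⟩) x2 := by
      funext x2
      rw [hφ]
      simp only []
      rw [hrep ⟨i, hi⟩, Finset.sum_mul]
      exact Finset.sum_congr rfl fun j _ => by ring
    rw [heq]
    obtain ⟨x2, hx2⟩ := hne ⟨i, hi⟩
    refine hD2.d1 _ ((isGamble_ind _).const_mul' _) ?_ ?_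
    · rw [Pi.le_def]
      intro x2'
      exact mul_nonneg (le_of_lt hposi) (ind_nonneg' _ _)
    · intro h0
      have := congrFun h0 x2
      rw [ind_of_mem' hx2, mul_one] at this
      exact absurd this.symm (ne_of_lt hposi)
  have hφmem : ∀ i, φ i ∈ D2 ∨ 0 ≤ φ i := by
    intro i
    by_cases hi : h i ∈ A21 D1 F2
    · exact Or.inl (hA21φ i hi)
    rcases hmem i with (h12 | h21) | hgp
    · obtain ⟨f2, hf2, B1, hB1, heq12⟩ := h12
      have heq : φ i = fun x2 => (∑ j ∈ t, w j * ind B1 (zs j)) * f2 x2 := by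
        funext x2
        rw [hφ]
        simp only []
        rw [heq12, Finset.sum_mul]
        exact Finset.sum_congr rfl fun j _ => by ring
      have hc' : 0 ≤ ∑ j ∈ t, w j * ind B1 (zs j) :=
        Finset.sum_nonneg fun j hj => mul_nonneg (hw0 j hj) (ind_nonneg' _ _)
      rcases hc'.eq_or_lt with hz | hcpos
      · right
        rw [Pi.le_def]
        intro x2
        have hx2 : φ i x2 = (∑ j ∈ t, w j * ind B1 (zs j)) * f2 x2 := congrFun heq x2
        rw [hx2, ← hz, zero_mul]
        exact le_rfl
      · left
        have hmem2 := hD2.d2 f2 hf2 _ hcpos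
        have : φ i = (∑ j ∈ t, w j * ind B1 (zs j)) • f2 := by
          rw [heq]; rfl
        rw [this]
        exact hmem2
    · exact absurd h21 hi
    · right
      rw [Pi.le_def]
      intro x2
      rw [hφ]
      exact Finset.sum_nonneg fun j hj => mul_nonneg (hw0 j hj) (hgp.2.1 (zs j, x2))
  obtain ⟨i₀, hi₀⟩ := hA
  have hmemD : (fun x2 => ∑ i, l i * φ i x2) ∈ D2 :=
    coneCombo' hD2 l φ (fun i => (hl i).le) hφg hφmem ⟨i₀, hl i₀, hA21φ i₀ hi₀⟩
  have hHle : (fun x2 => ∑ i, l i * φ i x2) ≤ 0 := by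
    rw [Pi.le_def]
    intro x2
    have hswap : ∑ i, l i * φ i x2 = ∑ j ∈ t, w j * ((∑ i, l i • h i) (zs j, x2)) := by
      rw [hφ]
      simp only []
      rw [← sum_swap_mul t w l (fun i j => h i (zs j, x2))]
      exact Finset.sum_congr rfl fun j _ => by rw [sum_smul_apply]
    rw [hswap]
    apply Finset.sum_nonpos
    intro j hj
    exact mul_nonpos_iff.2 (Or.inl ⟨hw0 j hj, hno (zs j, x2)⟩)
  exact hD2.d4 _ hHle hmemD

lemma key1 [Nonempty X1] [Nonempty X2]
    {D1 : Set (X1 → ℝ)} {D2 : Set (X2 → ℝ)} {F1 : Set (Set X1)} {F2 : Set (Set X2)}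
    (hD1 : CoherentSDG D1) (hD2 : CoherentSDG D2)
    (hF1 : ∀ A ∈ F1, A.Nonempty) (hF2 : ∀ A ∈ F2, A.Nonempty)
    {g : X1 × X2 → ℝ} (hg : g ∈ indNatExt D1 D2 F1 F2) : ∃ p, 0 < g p := by
  classical
  obtain ⟨N, l, h, hl, hmem, rfl⟩ := hg
  by_cases hA : ∃ i, h i ∈ A21 D1 F2
  · exact key1_of_A21 hD1 hD2 hF2 l h hl hmem hA
  by_cases hB : ∃ i, h i ∈ A12 D2 F1
  · have hmem' : ∀ i, swapFun (h i) ∈ (A12 D1 F2 ∪ A21 D2 F1) ∪ Gpos (X2 × X1) := by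
      intro i
      rcases hmem i with (h12 | h21) | hgp
      · exact Or.inl (Or.inr (swapFun_A12 h12))
      · exact Or.inl (Or.inl (swapFun_A21 h21))
      · exact Or.inr (swapFun_Gpos hgp)
    have hA' : ∃ i, swapFun (h i) ∈ A21 D2 F1 := by
      obtain ⟨i, hi⟩ := hB
      exact ⟨i, swapFun_A12 hi⟩
    obtain ⟨q, hq⟩ := key1_of_A21 hD2 hD1 hF1 l (fun i => swapFun (h i)) hl hmem' hA'
    refine ⟨(q.2, q.1), ?_⟩
    have hq' : 0 < swapFun (∑ i, l i • h i) q := by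
      rw [swapFun_sum]
      exact hq
    exact hq'
  · have hgp : ∀ i, h i ∈ Gpos (X1 × X2) := by
      intro i
      rcases hmem i with (h12 | h21) | hgp'
      · exact absurd h12 (fun hh => hB ⟨i, hh⟩)
      · exact absurd h21 (fun hh => hA ⟨i, hh⟩)
      · exact hgp'
    obtain ⟨p, hp⟩ := exists_pos_of_nonneg_ne_zero (hgp 0).2.1 (hgp 0).2.2
    refine ⟨p, ?_⟩
    rw [sum_smul_apply]
    have hterm : ∀ i ∈ Finset.univ (α := Fin (N + 1)), 0 ≤ l i * h i p :=
      fun i _ => mul_nonneg (hl i).le ((hgp i).2.1 p)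
    calc (0 : ℝ) < l 0 * h 0 p := mul_pos (hl 0) hp
      _ ≤ ∑ i, l i * h i p := Finset.single_le_sum hterm (Finset.mem_univ 0)

end KeyLemmas

section Key2

variable {X1 X2 : Type*}

lemma key2 [Nonempty X1] [Nonempty X2]
    {D1 : Set (X1 → ℝ)} {D2 : Set (X2 → ℝ)} {F1 : Set (Set X1)} {F2 : Set (Set X2)}
    (hD1 : CoherentSDG D1) (hD2 : CoherentSDG D2)
    (hF1 : ∀ A ∈ F1, A.Nonempty) (hF2 : ∀ A ∈ F2, A.Nonempty)
    (B2 : Set X2) (hB2 : B2.Nonempty) (f : X1 → ℝ)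
    (hg : (fun p : X1 × X2 => f p.1 * ind B2 p.2) ∈ indNatExt D1 D2 F1 F2) : f ∈ D1 := by
  classical
  obtain ⟨b2, hb2⟩ := hB2
  have hgam : IsGamble f := by
    obtain ⟨M, hM⟩ := isGamble_of_mem_indNatExt hD1 hD2 hg
    refine ⟨M, fun x1 => ?_⟩
    have := hM (x1, b2)
    simpa [ind_of_mem' hb2] using this
  have hfne : f ≠ 0 := by
    intro h0
    obtain ⟨p, hp⟩ := key1 hD1 hD2 hF1 hF2 hg
    rw [h0] at hp
    simp at hp
  obtain ⟨N, l, h, hl, hmem, hrepr⟩ := hg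
  set ιs := {i : Fin (N + 1) // h i ∈ A12 D2 F1} with hιs
  have hsel : ∀ ii : ιs, ∃ f2 ∈ D2, ∃ B1 ∈ F1 ∪ {Set.univ},
      h ii.1 = fun p => f2 p.2 * ind B1 p.1 := fun ii => ii.2
  choose f2sel hf2sel B1sel hB1sel hrep using hsel
  have hB1ne : ∀ ii : ιs, (B1sel ii).Nonempty := by
    intro ii
    rcases hB1sel ii with hmem' | huniv
    · exact hF1 _ hmem'
    · rw [Set.mem_singleton_iff] at huniv
      rw [huniv]
      exact Set.univ_nonempty
  set fam : Option ιs → X2 → ℝ := fun o => Option.elim o (ind B2) (fun ii => f2sel ii)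
    with hfam
  have hfamD : ∀ o, fam o ∈ D2 := by
    intro o
    cases o with
    | none =>
        refine hD2.d1 _ (isGamble_ind B2) (Pi.le_def.2 fun x => ind_nonneg' B2 x) ?_
        intro h0
        have h1 : ind B2 b2 = 0 := congrFun h0 b2
        rw [ind_of_mem' hb2] at h1
        norm_num at h1
    | some ii => exact hf2sel ii
  obtain ⟨κ, t, w, zs, hw0, hw1, hposv⟩ := lemA hD2 fam hfamD
  have hc : 0 < ∑ j ∈ t, w j * ind B2 (zs j) := hposv none
  set φ : Fin (N + 1) → X1 → ℝ := fun i x1 => ∑ j ∈ t, w j * h i (x1, zs j) with hφ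
  have hφg : ∀ i, IsGamble (φ i) := fun i =>
    isGamble_finsetSum t _
      (fun j _ => ((isGamble_of_gen hD1 hD2 (hmem i)).comp' _).const_mul' (w j))
  have hφmem : ∀ i, φ i ∈ D1 ∨ 0 ≤ φ i := by
    intro i
    by_cases hi : h i ∈ A12 D2 F1
    · left
      have hposi : 0 < ∑ j ∈ t, w j * f2sel ⟨i, hi⟩ (zs j) := hposv (some ⟨i, hi⟩)
      have heq : φ i = fun x1 =>
          (∑ j ∈ t, w j * f2sel ⟨i, hi⟩ (zs j)) * ind (B1sel ⟨i, hi⟩) x1 := by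
        funext x1
        rw [hφ]
        simp only []
        rw [hrep ⟨i, hi⟩, Finset.sum_mul]
        exact Finset.sum_congr rfl fun j _ => by ring
      rw [heq]
      obtain ⟨x1, hx1⟩ := hB1ne ⟨i, hi⟩
      refine hD1.d1 _ ((isGamble_ind _).const_mul' _)
        (Pi.le_def.2 fun x => mul_nonneg hposi.le (ind_nonneg' _ _)) ?_
      intro h0
      have := congrFun h0 x1
      rw [ind_of_mem' hx1, mul_one] at this
      exact absurd this.symm (ne_of_lt hposi)
    rcases hmem i with (h12 | h21) | hgp
    · exact absurd h12 hi
    · obtain ⟨f1, hf1, B2', hB2', heq21⟩ := h21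
      have heq : φ i = fun x1 => (∑ j ∈ t, w j * ind B2' (zs j)) * f1 x1 := by
        funext x1
        rw [hφ]
        simp only []
        rw [heq21, Finset.sum_mul]
        exact Finset.sum_congr rfl fun j _ => by ring
      have hc' : 0 ≤ ∑ j ∈ t, w j * ind B2' (zs j) :=
        Finset.sum_nonneg fun j hj => mul_nonneg (hw0 j hj) (ind_nonneg' _ _)
      rcases hc'.eq_or_lt with hz | hcpos
      · right
        rw [Pi.le_def]
        intro x1
        have hx := congrFun heq x1
        rw [hx, ← hz, zero_mul]
        exact le_rfl
      · left
        have hmem1 := hD1.d2 f1 hf1 _ hcpos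
        have heq' : φ i = (∑ j ∈ t, w j * ind B2' (zs j)) • f1 := by
          rw [heq]; rfl
        rw [heq']
        exact hmem1
    · right
      rw [Pi.le_def]
      intro x1
      rw [hφ]
      exact Finset.sum_nonneg fun j hj => mul_nonneg (hw0 j hj) (hgp.2.1 (x1, zs j))
  have hkey : (fun x1 => (∑ j ∈ t, w j * ind B2 (zs j)) * f x1)
      = fun x1 => ∑ i, l i * φ i x1 := by
    funext x1
    have h1 : (∑ j ∈ t, w j * ind B2 (zs j)) * f x1
        = ∑ j ∈ t, w j * (f x1 * ind B2 (zs j)) := by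
      rw [Finset.sum_mul]
      exact Finset.sum_congr rfl fun j _ => by ring
    rw [h1]
    calc ∑ j ∈ t, w j * (f x1 * ind B2 (zs j))
        = ∑ j ∈ t, w j * (∑ i, l i * h i (x1, zs j)) := by
          refine Finset.sum_congr rfl fun j _ => ?_
          rw [congrFun hrepr (x1, zs j), sum_smul_apply]
      _ = ∑ i, l i * φ i x1 := sum_swap_mul t w l (fun i j => h i (x1, zs j))
  rcases coneCombo hD1 l φ (fun i => (hl i).le) hφg hφmem with hmemD | hge
  · have hcf : (∑ j ∈ t, w j * ind B2 (zs j)) • f ∈ D1 := by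
      have heq' : (∑ j ∈ t, w j * ind B2 (zs j)) • f = fun x1 => ∑ i, l i * φ i x1 := by
        rw [← hkey]; rfl
      rw [heq']
      exact hmemD
    have hfin := hD1.d2 _ hcf (∑ j ∈ t, w j * ind B2 (zs j))⁻¹ (inv_pos.2 hc)
    rwa [smul_smul, inv_mul_cancel₀ (ne_of_gt hc), one_smul] at hfin
  · have hge' : 0 ≤ f := by
      rw [Pi.le_def]
      intro x1
      have hx := congrFun hkey x1
      have h0 : 0 ≤ (∑ j ∈ t, w j * ind B2 (zs j)) * f x1 := by
        rw [hx]
        exact Pi.le_def.1 hge x1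
      exact not_lt.1 fun h' => absurd h0 (not_le.2 (mul_neg_of_pos_of_neg hc h'))
    exact hD1.d1 f hgam hge' hfne

lemma indNatExt_coherent [Nonempty X1] [Nonempty X2]
    {D1 : Set (X1 → ℝ)} {D2 : Set (X2 → ℝ)} {F1 : Set (Set X1)} {F2 : Set (Set X2)}
    (hD1 : CoherentSDG D1) (hD2 : CoherentSDG D2)
    (hF1 : ∀ A ∈ F1, A.Nonempty) (hF2 : ∀ A ∈ F2, A.Nonempty) :
    CoherentSDG (indNatExt D1 D2 F1 F2) where
  subset_gambles := fun _ hf => isGamble_of_mem_indNatExt hD1 hD2 hf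
  d1 := fun _ hg h0 hne => mem_natExtSet_self (Or.inr ⟨hg, h0, hne⟩)
  d2 := fun _ hf l hl => natExtSet_smul hf hl
  d3 := fun _ hf _ hg => natExtSet_add hf hg
  d4 := fun f hle hf => by
    obtain ⟨p, hp⟩ := key1 hD1 hD2 hF1 hF2 hf
    exact absurd (Pi.le_def.1 hle p) (not_le.2 hp)

end Key2

/-- Proposition 11: `D1 ⊗ D2` is an independent product of `D1` and
`D2`. -/
theorem stmt9 {X1 X2 : Type*} [Nonempty X1] [Nonempty X2]
    (D1 : Set (X1 → ℝ)) (D2 : Set (X2 → ℝ))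
    (hD1 : CoherentSDG D1) (hD2 : CoherentSDG D2)
    (F1 : Set (Set X1)) (F2 : Set (Set X2))
    (hF1 : ∀ A ∈ F1, A.Nonempty) (hF2 : ∀ A ∈ F2, A.Nonempty) :
    IndProductSDG F1 F2 D1 D2 (indNatExt D1 D2 F1 F2) := by
  have hcoh : CoherentSDG (indNatExt D1 D2 F1 F2) :=
    indNatExt_coherent hD1 hD2 hF1 hF2
  have hcyl1 : ∀ f1 ∈ D1, ∀ B2 ∈ F2 ∪ {Set.univ},
      (fun p : X1 × X2 => f1 p.1 * ind B2 p.2) ∈ indNatExt D1 D2 F1 F2 :=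
    fun f1 hf1 B2 hB2 => mem_natExtSet_self (Or.inl (Or.inr ⟨f1, hf1, B2, hB2, rfl⟩))
  have hcyl2 : ∀ f2 ∈ D2, ∀ B1 ∈ F1 ∪ {Set.univ},
      (fun p : X1 × X2 => f2 p.2 * ind B1 p.1) ∈ indNatExt D1 D2 F1 F2 :=
    fun f2 hf2 B1 hB1 => mem_natExtSet_self (Or.inl (Or.inl ⟨f2, hf2, B1, hB1, rfl⟩))
  have huniv2 : (Set.univ : Set X2) ∈ F2 ∪ {Set.univ} := Or.inr rfl
  have huniv1 : (Set.univ : Set X1) ∈ F1 ∪ {Set.univ} := Or.inr rfl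
  have hm1 : ∀ B2 ∈ F2 ∪ {Set.univ}, marg1c (indNatExt D1 D2 F1 F2) B2 = D1 := by
    intro B2 hB2
    have hB2ne : B2.Nonempty := by
      rcases hB2 with hmem | huniv
      · exact hF2 _ hmem
      · rw [Set.mem_singleton_iff] at huniv
        rw [huniv]
        exact Set.univ_nonempty
    ext f
    constructor
    · rintro ⟨hgam, hmem⟩
      exact key2 hD1 hD2 hF1 hF2 B2 hB2ne f hmem
    · intro hf
      exact ⟨hD1.subset_gambles f hf, hcyl1 f hf B2 hB2⟩
  have hm2 : ∀ B1 ∈ F1 ∪ {Set.univ}, marg2c (indNatExt D1 D2 F1 F2) B1 = D2 := by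
    intro B1 hB1
    have hB1ne : B1.Nonempty := by
      rcases hB1 with hmem | huniv
      · exact hF1 _ hmem
      · rw [Set.mem_singleton_iff] at huniv
        rw [huniv]
        exact Set.univ_nonempty
    ext f
    constructor
    · rintro ⟨hgam, hmem⟩
      have hsw := indNatExt_swap hmem
      exact key2 hD2 hD1 hF2 hF1 B1 hB1ne f hsw
    · intro hf
      exact ⟨hD2.subset_gambles f hf, hcyl2 f hf B1 hB1⟩
  have hmarg1 : marg1 (indNatExt D1 D2 F1 F2) = D1 := by
    ext f
    have heq : (fun p : X1 × X2 => f p.1 * ind Set.univ p.2)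
        = fun p : X1 × X2 => f p.1 := by
      funext p
      rw [ind_of_mem' (Set.mem_univ p.2), mul_one]
    constructor
    · rintro ⟨hgam, hmem⟩
      rw [← heq] at hmem
      exact key2 hD1 hD2 hF1 hF2 Set.univ Set.univ_nonempty f hmem
    · intro hf
      refine ⟨hD1.subset_gambles f hf, ?_⟩
      have hmem := hcyl1 f hf Set.univ huniv2
      rw [heq] at hmem
      exact hmem
  have hmarg2 : marg2 (indNatExt D1 D2 F1 F2) = D2 := by
    ext f
    have heq : (fun p : X1 × X2 => f p.2 * ind Set.univ p.1)
        = fun p : X1 × X2 => f p.2 := by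
      funext p
      rw [ind_of_mem' (Set.mem_univ p.1), mul_one]
    constructor
    · rintro ⟨hgam, hmem⟩
      rw [← heq] at hmem
      have hsw := indNatExt_swap hmem
      exact key2 hD2 hD1 hF2 hF1 Set.univ Set.univ_nonempty f hsw
    · intro hf
      refine ⟨hD2.subset_gambles f hf, ?_⟩
      have hmem := hcyl2 f hf Set.univ huniv1
      rw [heq] at hmem
      exact hmem
  refine ⟨hcoh, ⟨?_, ?_⟩, hmarg1, hmarg2⟩
  · intro B2 hB2
    rw [hm1 B2 (Or.inl hB2), hmarg1]
  · intro B1 hB1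
    rw [hm2 B1 (Or.inl hB1), hmarg2]

end IPaper
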